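/- Consider the SITR system with vaccination term λS/N₀ where β, ρ are continuous with 0 ≤ β(t), ρ(t) ≤ 1 and α, γ, δ, λ, N₀ > 0. Suppose (S, I, T, R) solves the system on [0,∞) with nonnegative initial data summing to N₀, and suppose the solution components remain nonnegative. Then S(t) + I(t) + T(t) → 0 and R(t) → N₀ as t → ∞; i.e., the disease-free equilibrium (0,0,0,N₀) is globally attracting. -/

import Mathlib

open Filter

/-- Global attractivity of the disease-free equilibrium `(0, 0, 0, N₀)` for the
SITR system with vaccination term `λ S / N₀`. -/
theorem sitr_disease_free_globally_attracting
    (α γ δ lam N₀ : ℝ) (hα : 0 < α) (hγ : 0 < γ) (hδ : 0 < δ) (hlam : 0 < lam)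
    (hN₀ : 0 < N₀)
    (β ρ S I T R : ℝ → ℝ)
    (hβc : Continuous β) (hρc : Continuous ρ)
    (hβ : ∀ t, 0 ≤ β t ∧ β t ≤ 1) (hρ : ∀ t, 0 ≤ ρ t ∧ ρ t ≤ 1)
    (hS : ∀ t, 0 ≤ t → HasDerivAt S (-(α * β t * I t * S t / N₀) - lam * S t / N₀) t)
    (hI : ∀ t, 0 ≤ t → HasDerivAt I (α * β t * I t * S t / N₀ - (γ + ρ t) * I t) t)
    (hT : ∀ t, 0 ≤ t → HasDerivAt T (ρ t * I t - δ * T t) t)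
    (hR : ∀ t, 0 ≤ t → HasDerivAt R (γ * I t + δ * T t + lam * S t / N₀) t)
    (hinit : S 0 + I 0 + T 0 + R 0 = N₀)
    (hS0 : 0 ≤ S 0) (hI0 : 0 ≤ I 0) (hT0 : 0 ≤ T 0) (hR0 : 0 ≤ R 0)
    (hpos : ∀ t, 0 ≤ t → 0 ≤ S t ∧ 0 ≤ I t ∧ 0 ≤ T t ∧ 0 ≤ R t) :
    Tendsto (fun t => S t + I t + T t) atTop (nhds 0) ∧
    Tendsto R atTop (nhds N₀) := by
  set c : ℝ := min γ (min δ (lam / N₀)) with hc_def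
  have hc : 0 < c := lt_min hγ (lt_min hδ (div_pos hlam hN₀))
  set V : ℝ → ℝ := fun t => S t + I t + T t with hVdef
  -- derivative of V
  have hV' : ∀ t, 0 ≤ t →
      HasDerivAt V (-(lam * S t / N₀) - γ * I t - δ * T t) t := by
    intro t ht
    have h := ((hS t ht).add (hI t ht)).add (hT t ht)
    refine h.congr_deriv ?_
    ring
  -- W = V * exp(c t)
  set W : ℝ → ℝ := fun t => V t * Real.exp (c * t) with hWdef
  have hW' : ∀ t, 0 ≤ t → HasDerivAt W
      (((-(lam * S t / N₀) - γ * I t - δ * T t) + c * V t) * Real.exp (c * t)) t := by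
    intro t ht
    have hexp : HasDerivAt (fun t => Real.exp (c * t)) (Real.exp (c * t) * c) t := by
      have := ((hasDerivAt_id t).const_mul c).exp
      simpa using this
    have h := (hV' t ht).mul hexp
    refine h.congr_deriv ?_
    simp only [hVdef]
    ring
  have hWcont : ContinuousOn W (Set.Ici (0 : ℝ)) :=
    fun t ht => ((hW' t ht).continuousAt).continuousWithinAt
  have hWderiv_le : ∀ t ∈ interior (Set.Ici (0 : ℝ)), deriv W t ≤ 0 := by
    intro t ht
    rw [interior_Ici, Set.mem_Ioi] at ht
    rw [(hW' t ht.le).deriv]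
    obtain ⟨hSt, hIt, hTt, _⟩ := hpos t ht.le
    have h1 : c ≤ lam / N₀ := min_le_of_right_le (min_le_right _ _)
    have h2 : c ≤ γ := min_le_left _ _
    have h3 : c ≤ δ := min_le_of_right_le (min_le_left _ _)
    have hs : c * S t ≤ lam / N₀ * S t := mul_le_mul_of_nonneg_right h1 hSt
    have hi : c * I t ≤ γ * I t := mul_le_mul_of_nonneg_right h2 hIt
    have ht' : c * T t ≤ δ * T t := mul_le_mul_of_nonneg_right h3 hTt
    have hdivs : lam / N₀ * S t = lam * S t / N₀ := by ring
    have hfac : (-(lam * S t / N₀) - γ * I t - δ * T t) + c * V t ≤ 0 := by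
      simp only [hVdef]
      nlinarith
    exact mul_nonpos_of_nonpos_of_nonneg hfac (Real.exp_pos _).le
  have hWdiff : DifferentiableOn ℝ W (interior (Set.Ici (0 : ℝ))) := by
    intro t ht
    rw [interior_Ici, Set.mem_Ioi] at ht
    exact ((hW' t ht.le).differentiableAt).differentiableWithinAt
  have hanti : AntitoneOn W (Set.Ici (0 : ℝ)) :=
    antitoneOn_of_deriv_nonpos (convex_Ici 0) hWcont hWdiff hWderiv_le
  -- exponential bound on V
  have hVbound : ∀ t, 0 ≤ t → V t ≤ V 0 * Real.exp (-(c * t)) := by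
    intro t ht
    have hWle : W t ≤ W 0 := hanti Set.self_mem_Ici ht ht
    have hW0 : W 0 = V 0 := by simp [hWdef]
    have hWt : W t = V t * Real.exp (c * t) := rfl
    rw [hW0, hWt] at hWle
    have hE : (0 : ℝ) < Real.exp (c * t) := Real.exp_pos _
    rw [Real.exp_neg, mul_comm (V 0), ← div_eq_inv_mul, le_div_iff₀ hE]
    exact hWle
  have hVnonneg : ∀ t, 0 ≤ t → 0 ≤ V t := by
    intro t ht
    obtain ⟨hSt, hIt, hTt, _⟩ := hpos t ht
    simp only [hVdef]; linarith
  -- Tendsto of the bound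
  have hbound_tendsto : Tendsto (fun t => V 0 * Real.exp (-(c * t))) atTop (nhds 0) := by
    have h1 : Tendsto (fun t : ℝ => -(c * t)) atTop atBot := by
      have : Tendsto (fun t : ℝ => c * t) atTop atTop :=
        Tendsto.const_mul_atTop hc tendsto_id
      exact tendsto_neg_atBot_iff.mpr this
    have h2 : Tendsto (fun t : ℝ => Real.exp (-(c * t))) atTop (nhds 0) :=
      Real.tendsto_exp_atBot.comp h1
    have := h2.const_mul (V 0)
    simpa using this
  have hVtendsto : Tendsto V atTop (nhds 0) := by
    apply squeeze_zero' (eventually_atTop.mpr ⟨0, fun t ht => hVnonneg t ht⟩)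
      (eventually_atTop.mpr ⟨0, fun t ht => hVbound t ht⟩) hbound_tendsto
  refine ⟨hVtendsto, ?_⟩
  -- total population constant
  have hM' : ∀ t, 0 ≤ t → HasDerivAt (fun t => V t + R t) 0 t := by
    intro t ht
    have h := (hV' t ht).add (hR t ht)
    refine h.congr_deriv ?_
    ring
  have hconst : ∀ t, 0 ≤ t → V t + R t = N₀ := by
    intro t ht
    have hcont : ContinuousOn (fun t => V t + R t) (Set.Icc 0 t) :=
      fun x hx => ((hM' x hx.1).continuousAt).continuousWithinAt
    have hderiv : ∀ x ∈ Set.Ico (0 : ℝ) t, HasDerivWithinAt (fun t => V t + R t) 0 (Set.Ici x) x :=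
      fun x hx => (hM' x hx.1).hasDerivWithinAt
    have := constant_of_has_deriv_right_zero hcont hderiv t (Set.right_mem_Icc.mpr ht)
    have h0 : V 0 + R 0 = N₀ := by simp only [hVdef]; linarith
    rw [this, h0]
  have heq : R =ᶠ[atTop] fun t => N₀ - V t := by
    filter_upwards [eventually_ge_atTop (0 : ℝ)] with t ht
    have := hconst t ht
    linarith
  have : Tendsto (fun t => N₀ - V t) atTop (nhds (N₀ - 0)) :=
    tendsto_const_nhds.sub hVtendsto
  simpa using Tendsto.congr' heq.symm this
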